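/- Let S and S' be disjoint finite sets with |S'| ≥ 2 and 2^(|S'|-1) < |S| < 2^(|S'|). Let G be a graph on vertex set S ∪ S' in which both S and S' are stable (independent) sets. Then G is prime if and only if the map sending each s ∈ S to its neighborhood N_G(s) ⊆ S' is an injection from S into the nonempty subsets of S'. -/

import Mathlib

/-- `M` is a module of `G`: every vertex outside `M` is adjacent to all of `M` or to none. -/
def IsModule {V : Type*} (G : SimpleGraph V) (M : Set V) : Prop :=
  ∀ v ∉ M, (∀ m ∈ M, G.Adj v m) ∨ (∀ m ∈ M, ¬ G.Adj v m)

/-- `G` is prime: at least 4 vertices and only trivial modules. -/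
def IsPrimeGraph {V : Type*} (G : SimpleGraph V) : Prop :=
  4 ≤ Nat.card V ∧ ∀ M : Set V, IsModule G M → M = Set.univ ∨ M.Subsingleton

/-- Counting lemma: an injective assignment of nonempty subsets of `T` bounds the cardinality. -/
lemma count_aux {V : Type*} [Finite V] {S T : Set V} {f : V → Set V}
    (hinj : Set.InjOn f S) (hsub : ∀ s ∈ S, f s ⊆ T) (hne : ∀ s ∈ S, (f s).Nonempty) :
    S.ncard ≤ 2 ^ T.ncard - 1 := by
  classical
  have _inst : Fintype V := Fintype.ofFinite V
  rw [Set.ncard_eq_toFinset_card' S, Set.ncard_eq_toFinset_card' T]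
  have h1 : S.toFinset.card ≤ (T.toFinset.powerset.erase ∅).card := by
    apply Finset.card_le_card_of_injOn (fun v => (f v).toFinset)
    · intro s hs
      rw [Finset.mem_coe, Set.mem_toFinset] at hs
      rw [Finset.mem_coe, Finset.mem_erase, Finset.mem_powerset]
      exact ⟨by simpa [Set.toFinset_eq_empty] using (hne s hs).ne_empty,
        Set.toFinset_subset_toFinset.mpr (hsub s hs)⟩
    · intro a ha b hb hab
      simp only [Finset.mem_coe, Set.mem_toFinset] at ha hb
      exact hinj ha hb (Set.toFinset_inj.mp hab)
  calc S.toFinset.card ≤ (T.toFinset.powerset.erase ∅).card := h1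
    _ = 2 ^ T.toFinset.card - 1 := by
        rw [Finset.card_erase_of_mem (Finset.empty_mem_powerset _), Finset.card_powerset]

lemma arith_aux (n k : ℕ) (h1 : 1 ≤ k) (h2 : k + 1 ≤ n) :
    2 ^ k + 2 ^ (n - k) ≤ 2 ^ (n - 1) + 2 := by
  obtain ⟨k', rfl⟩ : ∃ k', k = k' + 1 := ⟨k - 1, by omega⟩
  obtain ⟨m, hm⟩ : ∃ m, n - (k' + 1) = m + 1 := ⟨n - (k' + 1) - 1, by omega⟩
  have hn1 : n - 1 = k' + m + 1 := by omega
  rw [hm, hn1]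
  have ha : 1 ≤ 2 ^ k' := Nat.one_le_two_pow
  have hc : 1 ≤ 2 ^ m := Nat.one_le_two_pow
  have e1 : 2 ^ (k' + 1) = 2 * 2 ^ k' := by ring
  have e2 : 2 ^ (m + 1) = 2 * 2 ^ m := by ring
  have e3 : 2 ^ (k' + m + 1) = 2 * (2 ^ k' * 2 ^ m) := by ring
  rw [e1, e2, e3]
  nlinarith [Nat.one_le_iff_ne_zero.mp ha]

theorem bipartite_stable_prime_iff {V : Type*} [Finite V] (G : SimpleGraph V) (S : Set V)
    (hS : ∀ a ∈ S, ∀ b ∈ S, ¬ G.Adj a b)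
    (hS' : ∀ a ∈ Sᶜ, ∀ b ∈ Sᶜ, ¬ G.Adj a b)
    (h2 : 2 ≤ Sᶜ.ncard)
    (hlo : 2 ^ (Sᶜ.ncard - 1) < S.ncard)
    (hhi : S.ncard < 2 ^ Sᶜ.ncard) :
    IsPrimeGraph G ↔
      ((∀ s ∈ S, (G.neighborSet s).Nonempty) ∧ Set.InjOn G.neighborSet S) := by
  classical
  set n := Sᶜ.ncard with hn
  have hNsub : ∀ s ∈ S, G.neighborSet s ⊆ Sᶜ := by
    intro s hs t ht htS
    exact hS s hs t htS ht
  constructor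
  · rintro ⟨h4, hmod⟩
    constructor
    · intro s hs
      by_contra hemp
      rw [Set.not_nonempty_iff_eq_empty] at hemp
      have hM : IsModule G ({s}ᶜ) := by
        intro v hv
        right
        intro m hm hadj
        have hv' : v = s := by simpa using hv
        subst hv'
        have : m ∈ G.neighborSet v := hadj
        rw [hemp] at this
        exact this
      rcases hmod _ hM with h | h
      · have : s ∈ ({s}ᶜ : Set V) := h ▸ Set.mem_univ s
        simp at this
      · have h1 : ({s}ᶜ : Set V).ncard ≤ 1 := by
          rcases h.eq_empty_or_singleton with he | ⟨x, hx⟩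
          · simp [he]
          · simp [hx]
        have h2' : ({s} : Set V).ncard + ({s}ᶜ : Set V).ncard = Nat.card V :=
          Set.ncard_add_ncard_compl _
        simp [Set.ncard_singleton] at h2'
        omega
    · intro a ha b hb hNab
      by_contra hab
      have hM : IsModule G {a, b} := by
        intro v hv
        have hiff : G.Adj v a ↔ G.Adj v b := by
          constructor
          · intro h
            have : v ∈ G.neighborSet a := h.symm
            rw [hNab] at this
            exact this.symm
          · intro h
            have : v ∈ G.neighborSet b := h.symm
            rw [← hNab] at this
            exact this.symm
        by_cases hva : G.Adj v a
        · left
          intro m hm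
          simp only [Set.mem_insert_iff, Set.mem_singleton_iff] at hm
          rcases hm with rfl | rfl
          · exact hva
          · exact hiff.mp hva
        · right
          intro m hm
          simp only [Set.mem_insert_iff, Set.mem_singleton_iff] at hm
          rcases hm with rfl | rfl
          · exact hva
          · exact fun h => hva (hiff.mpr h)
      rcases hmod _ hM with h | h
      · have : Nat.card V = ({a, b} : Set V).ncard := by
          rw [h, Set.ncard_univ]
        rw [Set.ncard_pair hab] at this
        omega
      · exact hab (h (by simp) (by simp))
  · rintro ⟨hne, hinj⟩
    have hn1 : 2 ≤ 2 ^ (n - 1) := by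
      calc 2 = 2 ^ 1 := rfl
        _ ≤ 2 ^ (n - 1) := Nat.pow_le_pow_right (by norm_num) (by omega)
    have hcard : S.ncard + Sᶜ.ncard = Nat.card V := Set.ncard_add_ncard_compl _
    -- distinguisher for two vertices of S
    have distA : ∀ a ∈ S, ∀ b ∈ S, a ≠ b →
        ∃ t ∈ Sᶜ, ¬ (G.Adj t a ↔ G.Adj t b) := by
      intro a ha b hb hab
      have hNe : G.neighborSet a ≠ G.neighborSet b := fun h => hab (hinj ha hb h)
      obtain ⟨t, ht⟩ : ∃ t, ¬ (t ∈ G.neighborSet a ↔ t ∈ G.neighborSet b) := by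
        by_contra h
        push_neg at h
        exact hNe (Set.ext fun t => (h t))
      have htSc : t ∈ Sᶜ := by
        by_cases h1 : t ∈ G.neighborSet a
        · exact hNsub a ha h1
        · have h2 : t ∈ G.neighborSet b := by tauto
          exact hNsub b hb h2
      refine ⟨t, htSc, fun h => ht ?_⟩
      constructor
      · intro h1; exact (h.mp h1.symm).symm
      · intro h1; exact (h.mpr h1.symm).symm
    -- distinguisher for two vertices of Sᶜ
    have distB : ∀ a ∈ Sᶜ, ∀ b ∈ Sᶜ, a ≠ b →
        ∃ s ∈ S, ¬ (G.Adj s a ↔ G.Adj s b) := by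
      intro a haSc b hbSc hab
      by_contra h
      push_neg at h
      have hall : ∀ s ∈ S, (a ∈ G.neighborSet s ↔ b ∈ G.neighborSet s) :=
        fun s hs => h s hs
      have hcount : S.ncard ≤ 2 ^ (Sᶜ \ {b}).ncard - 1 := by
        apply count_aux (f := fun s => G.neighborSet s \ {b})
        · intro x hx y hy hxy0
          have hxy : G.neighborSet x \ {b} = G.neighborSet y \ {b} := hxy0
          apply hinj hx hy
          have hxb : b ∈ G.neighborSet x ↔ b ∈ G.neighborSet y := by
            rw [← hall x hx, ← hall y hy]
            constructor
            · intro h1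
              have : a ∈ G.neighborSet x \ {b} := ⟨h1, by simp [hab]⟩
              rw [hxy] at this; exact this.1
            · intro h1
              have : a ∈ G.neighborSet y \ {b} := ⟨h1, by simp [hab]⟩
              rw [← hxy] at this; exact this.1
          ext t
          by_cases htb : t = b
          · subst htb; exact hxb
          · constructor
            · intro h1
              have : t ∈ G.neighborSet x \ {b} := ⟨h1, by simp [htb]⟩
              rw [hxy] at this; exact this.1
            · intro h1
              have : t ∈ G.neighborSet y \ {b} := ⟨h1, by simp [htb]⟩
              rw [← hxy] at this; exact this.1
        · intro s hs
          exact Set.diff_subset_diff_left (hNsub s hs)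
        · intro s hs
          obtain ⟨t, ht⟩ := hne s hs
          by_cases htb : t = b
          · subst htb
            have : a ∈ G.neighborSet s := (hall s hs).mpr ht
            exact ⟨a, this, by simp [hab]⟩
          · exact ⟨t, ht, by simp [htb]⟩
      have hncd : (Sᶜ \ {b}).ncard = n - 1 :=
        Set.ncard_diff_singleton_of_mem hbSc
      rw [hncd] at hcount
      omega
    refine ⟨by omega, ?_⟩
    intro M hM
    by_cases hMuniv : M = Set.univ
    · left; exact hMuniv
    right
    intro a ha b hb
    by_contra hab
    -- if `v ∉ M` then `v` cannot distinguish elements of `M`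
    have hsame : ∀ v ∉ M, ∀ x ∈ M, ∀ y ∈ M, (G.Adj v x ↔ G.Adj v y) := by
      intro v hv x hx y hy
      rcases hM v hv with h | h
      · exact iff_of_true (h x hx) (h y hy)
      · exact iff_of_false (h x hx) (h y hy)
    -- mixed case: M contains a vertex of S and a vertex of Sᶜ → contradiction
    have hmix : ∀ x ∈ M, x ∈ S → ∀ y ∈ M, y ∈ Sᶜ → False := by
      intro x hxM hxS y hyM hySc
      have hnone : ∀ v ∉ M, ∀ m ∈ M, ¬ G.Adj v m := by
        intro v hv
        rcases hM v hv with h | h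
        · exfalso
          by_cases hvS : v ∈ S
          · exact hS v hvS x hxS (h x hxM)
          · exact hS' v hvS y hySc (h y hyM)
        · exact h
      have hScM : ¬ Sᶜ ⊆ M := by
        intro hsub
        obtain ⟨v, hv⟩ := Set.ne_univ_iff_exists_notMem M |>.mp hMuniv
        have hvS : v ∈ S := by
          by_contra hvS
          exact hv (hsub hvS)
        obtain ⟨t, ht⟩ := hne v hvS
        exact hnone v hv t (hsub (hNsub v hvS ht)) ht
      obtain ⟨t0, ht0Sc, ht0M⟩ := Set.not_subset.mp hScM
      set k := (Sᶜ ∩ M).ncard with hk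
      have hsplit : (Sᶜ ∩ M).ncard + (Sᶜ \ M).ncard = n :=
        Set.ncard_inter_add_ncard_diff_eq_ncard Sᶜ M
      have hk1 : 1 ≤ k :=
        (Set.ncard_pos (Set.toFinite _)).mpr ⟨y, hySc, hyM⟩
      have hdne : 1 ≤ (Sᶜ \ M).ncard :=
        (Set.ncard_pos (Set.toFinite _)).mpr ⟨t0, ht0Sc, ht0M⟩
      have hA : (S ∩ M).ncard ≤ 2 ^ k - 1 := by
        apply count_aux (T := Sᶜ ∩ M) (hinj.mono Set.inter_subset_left)
        · rintro s ⟨hsS, hsM⟩ t ht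
          refine ⟨hNsub s hsS ht, ?_⟩
          by_contra htM
          exact hnone t htM s hsM ht.symm
        · rintro s ⟨hsS, _⟩
          exact hne s hsS
      have hB : (S \ M).ncard ≤ 2 ^ (n - k) - 1 := by
        have : (S \ M).ncard ≤ 2 ^ (Sᶜ \ M).ncard - 1 := by
          apply count_aux (T := Sᶜ \ M) (hinj.mono Set.diff_subset)
          · rintro s ⟨hsS, hsM⟩ t ht
            refine ⟨hNsub s hsS ht, ?_⟩
            intro htM
            exact hnone s hsM t htM ht
          · rintro s ⟨hsS, _⟩
            exact hne s hsS
        have he : (Sᶜ \ M).ncard = n - k := by omega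
        rwa [he] at this
      have hSsplit : (S ∩ M).ncard + (S \ M).ncard = S.ncard :=
        Set.ncard_inter_add_ncard_diff_eq_ncard S M
      have harith : 2 ^ k + 2 ^ (n - k) ≤ 2 ^ (n - 1) + 2 :=
        arith_aux n k hk1 (by omega)
      have h2k : 2 ≤ 2 ^ k := by
        calc 2 = 2 ^ 1 := rfl
          _ ≤ 2 ^ k := Nat.pow_le_pow_right (by norm_num) hk1
      have h2nk : 2 ≤ 2 ^ (n - k) := by
        calc 2 = 2 ^ 1 := rfl
          _ ≤ 2 ^ (n - k) := Nat.pow_le_pow_right (by norm_num) (by omega)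
      omega
    by_cases haS : a ∈ S
    · by_cases hbS : b ∈ S
      · obtain ⟨t, htSc, ht⟩ := distA a haS b hbS hab
        by_cases htM : t ∈ M
        · exact hmix a ha haS t htM htSc
        · exact ht (hsame t htM a ha b hb)
      · exact hmix a ha haS b hb hbS
    · by_cases hbS : b ∈ S
      · exact hmix b hb hbS a ha haS
      · obtain ⟨s, hsS, hs⟩ := distB a haS b hbS hab
        by_cases hsM : s ∈ M
        · exact hmix s hsM hsS a ha haS
        · exact hs (hsame s hsM a ha b hb)
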